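/- For every set P of formulas and all formulas A, B: if ⊢_P ; A∨B (i.e., the P-sequent with empty antecedent, empty body and stoup A∨B is derivable in ML_P), then ⊢_P ;A or ⊢_P A; or ⊢_P ;B or ⊢_P B;. -/
import Mathlib


/-- Formulas of ML_P: `F ::= 0 | ⊥ | X | F∧F | F∨F | F→F` with variables from `V`. -/
inductive Fml (V : Type) : Type where
  | zero : Fml V
  | bot : Fml V
  | var : V → Fml V
  | and : Fml V → Fml V → Fml V
  | or : Fml V → Fml V → Fml V
  | imp : Fml V → Fml V → Fml V

/-- All formulas of the sequent `Γ ⊢ Δ;Ξ` belong to the set `S`. -/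
def SeqIn {V : Type} (S : Set (Fml V)) (Γ Δ : Multiset (Fml V)) (Ξ : Option (Fml V)) : Prop :=
  (∀ A ∈ Γ, A ∈ S) ∧ (∀ A ∈ Δ, A ∈ S) ∧ (∀ A ∈ Ξ, A ∈ S)

/-- Derivability of the `P`-sequent `Γ ⊢ Δ;Ξ` in the system ML_P, where additionally
every sequent occurring in the derivation is required to consist of formulas of `S`
(take `S := Set.univ` for plain derivability), and the cut rules `cut₁`, `cut₂` are
allowed only when the flag `cut` is `true`. -/
inductive MLPG {V : Type} (P S : Set (Fml V)) (cut : Bool) :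
    Multiset (Fml V) → Multiset (Fml V) → Option (Fml V) → Prop where
  | ax (A : Fml V) : SeqIn S {A} 0 (some A) → MLPG P S cut {A} 0 (some A)
  | cut1 {Γ Γ' Δ Δ' : Multiset (Fml V)} {A : Fml V} {Ξ : Option (Fml V)} :
      cut = true → SeqIn S (Γ + Γ') (Δ + Δ') Ξ →
      MLPG P S cut Γ Δ (some A) → MLPG P S cut (Γ' + {A}) Δ' Ξ →
      MLPG P S cut (Γ + Γ') (Δ + Δ') Ξ
  | cut2 {Γ Γ' Δ Δ' : Multiset (Fml V)} {A : Fml V} {Ξ : Option (Fml V)} :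
      cut = true → SeqIn S (Γ + Γ') (Δ + Δ') Ξ →
      MLPG P S cut Γ (Δ + {A}) Ξ → MLPG P S cut (Γ' + {A}) Δ' none →
      MLPG P S cut (Γ + Γ') (Δ + Δ') Ξ
  | der {Γ Δ : Multiset (Fml V)} {A : Fml V} :
      A ∈ P → SeqIn S Γ (Δ + {A}) none →
      MLPG P S cut Γ Δ (some A) → MLPG P S cut Γ (Δ + {A}) none
  | cl {Γ Δ : Multiset (Fml V)} {A : Fml V} {Ξ : Option (Fml V)} :
      SeqIn S (Γ + {A}) Δ Ξ →
      MLPG P S cut (Γ + {A, A}) Δ Ξ → MLPG P S cut (Γ + {A}) Δ Ξ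
  | cr {Γ Δ : Multiset (Fml V)} {A : Fml V} {Ξ : Option (Fml V)} :
      SeqIn S Γ (Δ + {A}) Ξ →
      MLPG P S cut Γ (Δ + {A, A}) Ξ → MLPG P S cut Γ (Δ + {A}) Ξ
  | wl {Γ Δ : Multiset (Fml V)} {A : Fml V} {Ξ : Option (Fml V)} :
      SeqIn S (Γ + {A}) Δ Ξ →
      MLPG P S cut Γ Δ Ξ → MLPG P S cut (Γ + {A}) Δ Ξ
  | wr {Γ Δ : Multiset (Fml V)} {A : Fml V} {Ξ : Option (Fml V)} :
      A ∈ P → SeqIn S Γ (Δ + {A}) Ξ →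
      MLPG P S cut Γ Δ Ξ → MLPG P S cut Γ (Δ + {A}) Ξ
  | zeroL {Γ Δ : Multiset (Fml V)} {Ξ : Option (Fml V)} :
      (∀ A ∈ Δ, A ∈ P) → SeqIn S (Γ + {Fml.zero}) Δ Ξ →
      MLPG P S cut (Γ + {Fml.zero}) Δ Ξ
  | botL : SeqIn S {Fml.bot} 0 none → MLPG P S cut {Fml.bot} 0 none
  | and1L {Γ Δ : Multiset (Fml V)} {A B C : Fml V} :
      A ∉ P → B ∉ P → SeqIn S (Γ + {Fml.and A B}) Δ (some C) →
      MLPG P S cut (Γ + {A, B}) Δ (some C) →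
      MLPG P S cut (Γ + {Fml.and A B}) Δ (some C)
  | and2L {Γ Δ : Multiset (Fml V)} {A B : Fml V} :
      SeqIn S (Γ + {Fml.and A B}) Δ none →
      MLPG P S cut (Γ + {A, B}) Δ none →
      MLPG P S cut (Γ + {Fml.and A B}) Δ none
  | and1R {Γ Γ' Δ Δ' : Multiset (Fml V)} {A B : Fml V} :
      SeqIn S (Γ + Γ') (Δ + Δ') (some (Fml.and A B)) →
      MLPG P S cut Γ Δ (some A) → MLPG P S cut Γ' Δ' (some B) →
      MLPG P S cut (Γ + Γ') (Δ + Δ') (some (Fml.and A B))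
  | and2R {Γ Γ' Δ Δ' : Multiset (Fml V)} {A B : Fml V} :
      SeqIn S (Γ + Γ') (Δ + Δ') (some (Fml.and A B)) →
      MLPG P S cut Γ (Δ + {A}) none → MLPG P S cut Γ' (Δ' + {B}) none →
      MLPG P S cut (Γ + Γ') (Δ + Δ') (some (Fml.and A B))
  | and3R {Γ Γ' Δ Δ' : Multiset (Fml V)} {A B : Fml V} :
      SeqIn S (Γ + Γ') (Δ + Δ') (some (Fml.and A B)) →
      MLPG P S cut Γ Δ (some A) → MLPG P S cut Γ' (Δ' + {B}) none →
      MLPG P S cut (Γ + Γ') (Δ + Δ') (some (Fml.and A B))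
  | and4R {Γ Γ' Δ Δ' : Multiset (Fml V)} {A B : Fml V} :
      SeqIn S (Γ + Γ') (Δ + Δ') (some (Fml.and A B)) →
      MLPG P S cut Γ (Δ + {A}) none → MLPG P S cut Γ' Δ' (some B) →
      MLPG P S cut (Γ + Γ') (Δ + Δ') (some (Fml.and A B))
  | or1L {Γ Δ : Multiset (Fml V)} {A B C : Fml V} :
      A ∉ P → B ∉ P → SeqIn S (Γ + {Fml.or A B}) Δ (some C) →
      MLPG P S cut (Γ + {A}) Δ (some C) → MLPG P S cut (Γ + {B}) Δ (some C) →
      MLPG P S cut (Γ + {Fml.or A B}) Δ (some C)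
  | or2L {Γ Δ : Multiset (Fml V)} {A B : Fml V} :
      SeqIn S (Γ + {Fml.or A B}) Δ none →
      MLPG P S cut (Γ + {A}) Δ none → MLPG P S cut (Γ + {B}) Δ none →
      MLPG P S cut (Γ + {Fml.or A B}) Δ none
  | or1R {Γ Δ : Multiset (Fml V)} {A B : Fml V} :
      SeqIn S Γ Δ (some (Fml.or A B)) →
      MLPG P S cut Γ Δ (some A) → MLPG P S cut Γ Δ (some (Fml.or A B))
  | or2R {Γ Δ : Multiset (Fml V)} {A B : Fml V} :
      SeqIn S Γ Δ (some (Fml.or A B)) →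
      MLPG P S cut Γ Δ (some B) → MLPG P S cut Γ Δ (some (Fml.or A B))
  | or3R {Γ Δ : Multiset (Fml V)} {A B : Fml V} :
      SeqIn S Γ Δ (some (Fml.or A B)) →
      MLPG P S cut Γ (Δ + {A}) none → MLPG P S cut Γ Δ (some (Fml.or A B))
  | or4R {Γ Δ : Multiset (Fml V)} {A B : Fml V} :
      SeqIn S Γ Δ (some (Fml.or A B)) →
      MLPG P S cut Γ (Δ + {B}) none → MLPG P S cut Γ Δ (some (Fml.or A B))
  | imp1L {Γ Γ' Δ Δ' : Multiset (Fml V)} {A B C : Fml V} :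
      B ∉ P → SeqIn S (Γ + Γ' + {Fml.imp A B}) (Δ + Δ') (some C) →
      MLPG P S cut (Γ + {B}) Δ (some C) → MLPG P S cut Γ' Δ' (some A) →
      MLPG P S cut (Γ + Γ' + {Fml.imp A B}) (Δ + Δ') (some C)
  | imp2L {Γ Γ' Δ Δ' : Multiset (Fml V)} {A B : Fml V} :
      SeqIn S (Γ + Γ' + {Fml.imp A B}) (Δ + Δ') none →
      MLPG P S cut (Γ + {B}) Δ none → MLPG P S cut Γ' Δ' (some A) →
      MLPG P S cut (Γ + Γ' + {Fml.imp A B}) (Δ + Δ') none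
  | imp3L {Γ Γ' Δ Δ' : Multiset (Fml V)} {A B : Fml V} {Ξ : Option (Fml V)} :
      SeqIn S (Γ + Γ' + {Fml.imp A B}) (Δ + Δ') Ξ →
      MLPG P S cut (Γ + {B}) Δ none → MLPG P S cut Γ' (Δ' + {A}) Ξ →
      MLPG P S cut (Γ + Γ' + {Fml.imp A B}) (Δ + Δ') Ξ
  | imp1R {Γ Δ : Multiset (Fml V)} {A B : Fml V} :
      SeqIn S Γ Δ (some (Fml.imp A B)) →
      MLPG P S cut (Γ + {A}) Δ (some B) → MLPG P S cut Γ Δ (some (Fml.imp A B))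
  | imp2R {Γ Δ : Multiset (Fml V)} {A B : Fml V} :
      SeqIn S Γ Δ (some (Fml.imp A B)) →
      MLPG P S cut (Γ + {A}) (Δ + {B}) none → MLPG P S cut Γ Δ (some (Fml.imp A B))

/-- `Γ ⊢_P Δ;Ξ` : the `P`-sequent `Γ ⊢ Δ;Ξ` is derivable in ML_P. -/
def MLPDer {V : Type} (P : Set (Fml V)) (Γ Δ : Multiset (Fml V)) (Ξ : Option (Fml V)) : Prop :=
  MLPG P Set.univ true Γ Δ Ξ
section Aux

variable {V : Type} {P : Set (Fml V)}

lemma seqin_univ {Γ Δ : Multiset (Fml V)} {Ξ : Option (Fml V)} :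
    SeqIn (Set.univ : Set (Fml V)) Γ Δ Ξ :=
  ⟨fun _ _ => trivial, fun _ _ => trivial, fun _ _ => trivial⟩

lemma dcast {Γ Γ' Δ Δ' : Multiset (Fml V)} {Ξ : Option (Fml V)}
    (h : MLPDer P Γ Δ Ξ) (e : Γ = Γ') (e' : Δ = Δ') : MLPDer P Γ' Δ' Ξ := e ▸ e' ▸ h

lemma ax' (A : Fml V) : MLPDer P {A} 0 (some A) := MLPG.ax A seqin_univ

lemma cut1' {Γ Γ' Δ Δ' : Multiset (Fml V)} {A : Fml V} {Ξ : Option (Fml V)}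
    (h1 : MLPDer P Γ Δ (some A)) (h2 : MLPDer P (Γ' + {A}) Δ' Ξ) :
    MLPDer P (Γ + Γ') (Δ + Δ') Ξ := MLPG.cut1 rfl seqin_univ h1 h2

lemma cut2' {Γ Γ' Δ Δ' : Multiset (Fml V)} {A : Fml V} {Ξ : Option (Fml V)}
    (h1 : MLPDer P Γ (Δ + {A}) Ξ) (h2 : MLPDer P (Γ' + {A}) Δ' none) :
    MLPDer P (Γ + Γ') (Δ + Δ') Ξ := MLPG.cut2 rfl seqin_univ h1 h2

/-- eliminate a body formula using a derivation with it on the left -/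
lemma elim_body {Δ Λ : Multiset (Fml V)} {A : Fml V} {Ξ : Option (Fml V)}
    (h1 : MLPDer P 0 (Δ + {A}) Ξ) (h2 : MLPDer P {A} Λ none) :
    MLPDer P 0 (Δ + Λ) Ξ := by
  have h2' : MLPDer P (0 + {A}) Λ none := by simpa using h2
  have := cut2' (P := P) h1 h2'
  simpa using this

/-- body weakening -/
lemma wb {Γ Δ : Multiset (Fml V)} {Ξ : Option (Fml V)}
    (h : MLPDer P Γ Δ Ξ) (W : Multiset (Fml V)) (hW : ∀ x ∈ W, x ∈ P) :
    MLPDer P Γ (Δ + W) Ξ := by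
  induction W using Multiset.induction_on with
  | empty => simpa using h
  | cons a s ih =>
      have ha : a ∈ P := hW a (Multiset.mem_cons_self a s)
      have hs : ∀ x ∈ s, x ∈ P := fun x hx => hW x (Multiset.mem_cons_of_mem hx)
      have := MLPG.wr (Δ := Δ + s) (A := a) ha seqin_univ (ih hs)
      exact dcast this rfl (by simp only [← Multiset.singleton_add]; abel)

/-- body contraction -/
lemma cb {Γ Δ : Multiset (Fml V)} {Ξ : Option (Fml V)} (W : Multiset (Fml V))
    (h : MLPDer P Γ (Δ + W + W) Ξ) : MLPDer P Γ (Δ + W) Ξ := by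
  induction W using Multiset.induction_on generalizing Δ with
  | empty => simpa using h
  | cons a s ih =>
      have h' : MLPDer P Γ ((Δ + s + s) + {a, a}) Ξ := by
        refine dcast h rfl ?_
        show Δ + a ::ₘ s + a ::ₘ s = Δ + s + s + {a, a}
        have e : ({a, a} : Multiset (Fml V)) = {a} + {a} := rfl
        rw [e]; simp only [← Multiset.singleton_add]; abel
      have h2 := MLPG.cr (Δ := Δ + s + s) (A := a) seqin_univ h'
      have h3 : MLPDer P Γ ((Δ + {a}) + s + s) Ξ := dcast h2 rfl (by abel)
      have := ih h3
      exact dcast this rfl (by simp only [← Multiset.singleton_add]; abel)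

/-- cut away left hypotheses each of which is stoup-derivable relative to Θ -/
lemma cutaway {Θ : Multiset (Fml V)} (hΘ : ∀ x ∈ Θ, x ∈ P)
    (Γ₁ : Multiset (Fml V)) {Γ₀ Δ : Multiset (Fml V)} {Ξ : Option (Fml V)}
    (h : MLPDer P (Γ₀ + Γ₁) Δ Ξ)
    (hyp : ∀ G ∈ Γ₁, MLPDer P 0 Θ (some G)) :
    MLPDer P Γ₀ (Θ + Δ) Ξ := by
  induction Γ₁ using Multiset.induction_on generalizing Δ with
  | empty => exact dcast (wb h Θ hΘ) (by simp) (by abel)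
  | cons a s ih =>
      have hG : MLPDer P 0 Θ (some a) := hyp a (Multiset.mem_cons_self a s)
      have h' : MLPDer P ((Γ₀ + s) + {a}) Δ Ξ := by
        refine dcast h ?_ rfl
        simp only [← Multiset.singleton_add]; abel
      have hc := cut1' hG h'
      have hc' : MLPDer P (Γ₀ + s) (Θ + Δ) Ξ := by simpa using hc
      have := ih hc' (fun x hx => hyp x (Multiset.mem_cons_of_mem hx))
      have h5 : MLPDer P Γ₀ (Δ + Θ + Θ) Ξ := dcast this rfl (by abel)
      exact dcast (cb Θ h5) rfl (by abel)

end Aux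
section Aux2
variable {V : Type} {P : Set (Fml V)}

lemma memP_add {Δ Δ' : Multiset (Fml V)} (h1 : ∀ x ∈ Δ, x ∈ P) (h2 : ∀ x ∈ Δ', x ∈ P) :
    ∀ x ∈ Δ + Δ', x ∈ P := fun x hx => (Multiset.mem_add.1 hx).elim (h1 x) (h2 x)

lemma memP_sing {A : Fml V} (hA : A ∈ P) : ∀ x ∈ ({A} : Multiset (Fml V)), x ∈ P := by
  intro x hx; rwa [Multiset.mem_singleton.1 hx]

lemma memP_push {Δ : Multiset (Fml V)} {A : Fml V} (h1 : ∀ x ∈ Δ, x ∈ P) (hA : A ∈ P) :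
    ∀ x ∈ Δ + {A}, x ∈ P := memP_add h1 (memP_sing hA)

lemma memP_pop {Δ : Multiset (Fml V)} {A : Fml V} (h : ∀ x ∈ Δ + {A}, x ∈ P) :
    ∀ x ∈ Δ, x ∈ P := fun x hx => h x (Multiset.mem_add.2 (Or.inl hx))

lemma memP_pop' {Δ : Multiset (Fml V)} {A : Fml V} (h : ∀ x ∈ Δ + {A}, x ∈ P) : A ∈ P :=
  h A (Multiset.mem_add.2 (Or.inr (Multiset.mem_singleton_self A)))

/-- the body of any derivable sequent consists of formulas of `P` -/
lemma inv {S : Set (Fml V)} {c : Bool} {Γ Δ : Multiset (Fml V)} {Ξ : Option (Fml V)}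
    (h : MLPG P S c Γ Δ Ξ) : ∀ D ∈ Δ, D ∈ P := by
  induction h with
  | ax A _ => simp
  | cut1 _ _ _ _ ih1 ih2 => exact memP_add ih1 ih2
  | cut2 _ _ _ _ ih1 ih2 => exact memP_add (memP_pop ih1) ih2
  | der hA _ _ ih => exact memP_push ih hA
  | cl _ _ ih => exact ih
  | cr _ _ ih =>
      intro x hx
      refine ih x ?_
      simp only [Multiset.mem_add, Multiset.mem_singleton, Multiset.insert_eq_cons,
        Multiset.mem_cons] at hx ⊢
      tauto
  | wl _ _ ih => exact ih
  | wr hA _ _ ih => exact memP_push ih hA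
  | zeroL hΔ _ => exact hΔ
  | botL _ => simp
  | and1L _ _ _ _ ih => exact ih
  | and2L _ _ ih => exact ih
  | and1R _ _ _ ih1 ih2 => exact memP_add ih1 ih2
  | and2R _ _ _ ih1 ih2 => exact memP_add (memP_pop ih1) (memP_pop ih2)
  | and3R _ _ _ ih1 ih2 => exact memP_add ih1 (memP_pop ih2)
  | and4R _ _ _ ih1 ih2 => exact memP_add (memP_pop ih1) ih2
  | or1L _ _ _ _ _ ih1 ih2 => exact ih1
  | or2L _ _ _ ih1 ih2 => exact ih1
  | or1R _ _ ih => exact ih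
  | or2R _ _ ih => exact ih
  | or3R _ _ ih => exact memP_pop ih
  | or4R _ _ ih => exact memP_pop ih
  | imp1L _ _ _ _ ih1 ih2 => exact memP_add ih1 ih2
  | imp2L _ _ _ ih1 ih2 => exact memP_add ih1 ih2
  | imp3L _ _ _ ih1 ih2 => exact memP_add ih1 (memP_pop ih2)
  | imp1R _ _ ih => exact ih
  | imp2R _ _ ih => exact memP_pop ih

end Aux2
section Snd
variable {V : Type} {P : Set (Fml V)}

/-- trivial classical valuation -/
def evalF : Fml V → Prop
  | .zero => False
  | .bot => False
  | .var _ => True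
  | .and A B => evalF A ∧ evalF B
  | .or A B => evalF A ∨ evalF B
  | .imp A B => evalF A → evalF B

lemma fm_add {p : Fml V → Prop} {Γ Γ' : Multiset (Fml V)} :
    (∀ G ∈ Γ + Γ', p G) ↔ (∀ G ∈ Γ, p G) ∧ (∀ G ∈ Γ', p G) := by
  constructor
  · intro h
    exact ⟨fun g hg => h g (Multiset.mem_add.2 (Or.inl hg)),
           fun g hg => h g (Multiset.mem_add.2 (Or.inr hg))⟩
  · rintro ⟨h1, h2⟩ g hg
    exact (Multiset.mem_add.1 hg).elim (h1 g) (h2 g)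

lemma fm_sing {p : Fml V → Prop} {A : Fml V} :
    (∀ G ∈ ({A} : Multiset (Fml V)), p G) ↔ p A := by simp

lemma fm_push {p : Fml V → Prop} {Γ : Multiset (Fml V)} {A : Fml V} :
    (∀ G ∈ Γ + {A}, p G) ↔ (∀ G ∈ Γ, p G) ∧ p A := fm_add.trans (and_congr Iff.rfl fm_sing)

lemma fm_pair {p : Fml V → Prop} {Γ : Multiset (Fml V)} {A B : Fml V} :
    (∀ G ∈ Γ + {A, B}, p G) ↔ (∀ G ∈ Γ, p G) ∧ p A ∧ p B := by
  rw [fm_add]; simp [Multiset.insert_eq_cons]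

lemma ex_addl {p : Fml V → Prop} {Δ Δ' : Multiset (Fml V)} (h : ∃ D ∈ Δ, p D) :
    ∃ D ∈ Δ + Δ', p D := by
  obtain ⟨D, hD, hp⟩ := h; exact ⟨D, Multiset.mem_add.2 (Or.inl hD), hp⟩

lemma ex_addr {p : Fml V → Prop} {Δ Δ' : Multiset (Fml V)} (h : ∃ D ∈ Δ', p D) :
    ∃ D ∈ Δ + Δ', p D := by
  obtain ⟨D, hD, hp⟩ := h; exact ⟨D, Multiset.mem_add.2 (Or.inr hD), hp⟩

lemma ex_sing {p : Fml V → Prop} {A : Fml V} (h : p A) :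
    ∃ D ∈ ({A} : Multiset (Fml V)), p D := ⟨A, Multiset.mem_singleton_self A, h⟩

lemma ex_pop {p : Fml V → Prop} {Δ : Multiset (Fml V)} {A : Fml V} (h : ∃ D ∈ Δ + {A}, p D) :
    (∃ D ∈ Δ, p D) ∨ p A := by
  obtain ⟨D, hD, hp⟩ := h
  rcases Multiset.mem_add.1 hD with h' | h'
  · exact Or.inl ⟨D, h', hp⟩
  · exact Or.inr (Multiset.mem_singleton.1 h' ▸ hp)

/-- soundness w.r.t. the trivial classical valuation -/
lemma snd {S : Set (Fml V)} {c : Bool} {Γ Δ : Multiset (Fml V)} {Ξ : Option (Fml V)}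
    (h : MLPG P S c Γ Δ Ξ) (hΓ : ∀ G ∈ Γ, evalF G) :
    (∃ D ∈ Δ, evalF D) ∨ (∃ X, Ξ = some X ∧ evalF X) := by
  induction h with
  | ax A _ => exact Or.inr ⟨A, rfl, fm_sing.1 hΓ⟩
  | cut1 _ _ _ _ ih1 ih2 =>
      obtain ⟨h1, h2⟩ := fm_add.1 hΓ
      rcases ih1 h1 with hd | ⟨X, hX, hvX⟩
      · exact Or.inl (ex_addl hd)
      · injection hX with eX; subst eX
        rcases ih2 (fm_push.2 ⟨h2, hvX⟩) with hd | hx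
        · exact Or.inl (ex_addr hd)
        · exact Or.inr hx
  | cut2 _ _ _ _ ih1 ih2 =>
      obtain ⟨h1, h2⟩ := fm_add.1 hΓ
      rcases ih1 h1 with hd | hx
      · rcases ex_pop hd with hd' | hA
        · exact Or.inl (ex_addl hd')
        · rcases ih2 (fm_push.2 ⟨h2, hA⟩) with hd | ⟨X, hX, _⟩
          · exact Or.inl (ex_addr hd)
          · exact absurd hX (by simp)
      · exact Or.inr hx
  | der _ _ _ ih =>
      rcases ih hΓ with hd | ⟨X, hX, hvX⟩
      · exact Or.inl (ex_addl hd)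
      · injection hX with eX; subst eX
        exact Or.inl (ex_addr (ex_sing hvX))
  | cl _ _ ih =>
      obtain ⟨h1, h2⟩ := fm_push.1 hΓ
      exact ih (fm_pair.2 ⟨h1, h2, h2⟩)
  | cr _ _ ih =>
      rcases ih hΓ with hd | hx
      · obtain ⟨D, hD, hp⟩ := hd
        rw [Multiset.mem_add] at hD
        rcases hD with h | h
        · exact Or.inl ⟨D, Multiset.mem_add.2 (Or.inl h), hp⟩
        · simp only [Multiset.insert_eq_cons, Multiset.mem_cons, Multiset.mem_singleton,
            or_self] at h
          subst h
          exact Or.inl (ex_addr (ex_sing hp))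
      · exact Or.inr hx
  | wl _ _ ih => exact ih (fm_push.1 hΓ).1
  | wr _ _ _ ih =>
      rcases ih hΓ with hd | hx
      · exact Or.inl (ex_addl hd)
      · exact Or.inr hx
  | zeroL _ _ => exact absurd (fm_push.1 hΓ).2 (by simp [evalF])
  | botL _ => exact absurd (fm_sing.1 hΓ) (by simp [evalF])
  | and1L _ _ _ _ ih =>
      obtain ⟨h1, h2⟩ := fm_push.1 hΓ
      obtain ⟨hA, hB⟩ : evalF _ ∧ evalF _ := h2
      exact ih (fm_pair.2 ⟨h1, hA, hB⟩)
  | and2L _ _ ih =>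
      obtain ⟨h1, h2⟩ := fm_push.1 hΓ
      obtain ⟨hA, hB⟩ : evalF _ ∧ evalF _ := h2
      exact ih (fm_pair.2 ⟨h1, hA, hB⟩)
  | and1R _ _ _ ih1 ih2 =>
      obtain ⟨h1, h2⟩ := fm_add.1 hΓ
      rcases ih1 h1 with hd | ⟨X, hX, hvX⟩
      · exact Or.inl (ex_addl hd)
      · rcases ih2 h2 with hd | ⟨Y, hY, hvY⟩
        · exact Or.inl (ex_addr hd)
        · injection hX with eX; subst eX
          injection hY with eY; subst eY
          exact Or.inr ⟨_, rfl, ⟨hvX, hvY⟩⟩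
  | and2R _ _ _ ih1 ih2 =>
      obtain ⟨h1, h2⟩ := fm_add.1 hΓ
      rcases ih1 h1 with hd | ⟨X, hX, _⟩
      · rcases ex_pop hd with hd' | hA
        · exact Or.inl (ex_addl hd')
        · rcases ih2 h2 with hd | ⟨Y, hY, _⟩
          · rcases ex_pop hd with hd' | hB
            · exact Or.inl (ex_addr hd')
            · exact Or.inr ⟨_, rfl, ⟨hA, hB⟩⟩
          · exact absurd hY (by simp)
      · exact absurd hX (by simp)
  | and3R _ _ _ ih1 ih2 =>
      obtain ⟨h1, h2⟩ := fm_add.1 hΓ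
      rcases ih1 h1 with hd | ⟨X, hX, hvX⟩
      · exact Or.inl (ex_addl hd)
      · injection hX with eX; subst eX
        rcases ih2 h2 with hd | ⟨Y, hY, _⟩
        · rcases ex_pop hd with hd' | hB
          · exact Or.inl (ex_addr hd')
          · exact Or.inr ⟨_, rfl, ⟨hvX, hB⟩⟩
        · exact absurd hY (by simp)
  | and4R _ _ _ ih1 ih2 =>
      obtain ⟨h1, h2⟩ := fm_add.1 hΓ
      rcases ih1 h1 with hd | ⟨X, hX, _⟩
      · rcases ex_pop hd with hd' | hA
        · exact Or.inl (ex_addl hd')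
        · rcases ih2 h2 with hd | ⟨Y, hY, hvY⟩
          · exact Or.inl (ex_addr hd)
          · injection hY with eY; subst eY
            exact Or.inr ⟨_, rfl, ⟨hA, hvY⟩⟩
      · exact absurd hX (by simp)
  | or1L _ _ _ _ _ ih1 ih2 =>
      obtain ⟨h1, h2⟩ := fm_push.1 hΓ
      rcases (h2 : evalF _ ∨ evalF _) with hA | hB
      · exact ih1 (fm_push.2 ⟨h1, hA⟩)
      · exact ih2 (fm_push.2 ⟨h1, hB⟩)
  | or2L _ _ _ ih1 ih2 =>
      obtain ⟨h1, h2⟩ := fm_push.1 hΓ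
      rcases (h2 : evalF _ ∨ evalF _) with hA | hB
      · exact ih1 (fm_push.2 ⟨h1, hA⟩)
      · exact ih2 (fm_push.2 ⟨h1, hB⟩)
  | or1R _ _ ih =>
      rcases ih hΓ with hd | ⟨X, hX, hvX⟩
      · exact Or.inl hd
      · injection hX with eX; subst eX
        exact Or.inr ⟨_, rfl, Or.inl hvX⟩
  | or2R _ _ ih =>
      rcases ih hΓ with hd | ⟨X, hX, hvX⟩
      · exact Or.inl hd
      · injection hX with eX; subst eX
        exact Or.inr ⟨_, rfl, Or.inr hvX⟩
  | or3R _ _ ih =>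
      rcases ih hΓ with hd | ⟨X, hX, _⟩
      · rcases ex_pop hd with hd' | hA
        · exact Or.inl hd'
        · exact Or.inr ⟨_, rfl, Or.inl hA⟩
      · exact absurd hX (by simp)
  | or4R _ _ ih =>
      rcases ih hΓ with hd | ⟨X, hX, _⟩
      · rcases ex_pop hd with hd' | hB
        · exact Or.inl hd'
        · exact Or.inr ⟨_, rfl, Or.inr hB⟩
      · exact absurd hX (by simp)
  | imp1L _ _ _ _ ih1 ih2 =>
      obtain ⟨h12, himp⟩ := fm_push.1 hΓ
      obtain ⟨h1, h2⟩ := fm_add.1 h12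
      rcases ih2 h2 with hd | ⟨X, hX, hvX⟩
      · exact Or.inl (ex_addr hd)
      · injection hX with eX; subst eX
        have hB : evalF _ := (himp : evalF _ → evalF _) hvX
        rcases ih1 (fm_push.2 ⟨h1, hB⟩) with hd | hx
        · exact Or.inl (ex_addl hd)
        · exact Or.inr hx
  | imp2L _ _ _ ih1 ih2 =>
      obtain ⟨h12, himp⟩ := fm_push.1 hΓ
      obtain ⟨h1, h2⟩ := fm_add.1 h12
      rcases ih2 h2 with hd | ⟨X, hX, hvX⟩
      · exact Or.inl (ex_addr hd)
      · injection hX with eX; subst eX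
        have hB : evalF _ := (himp : evalF _ → evalF _) hvX
        rcases ih1 (fm_push.2 ⟨h1, hB⟩) with hd | ⟨Y, hY, _⟩
        · exact Or.inl (ex_addl hd)
        · exact absurd hY (by simp)
  | imp3L _ _ _ ih1 ih2 =>
      obtain ⟨h12, himp⟩ := fm_push.1 hΓ
      obtain ⟨h1, h2⟩ := fm_add.1 h12
      rcases ih2 h2 with hd | hx
      · rcases ex_pop hd with hd' | hA
        · exact Or.inl (ex_addr hd')
        · have hB : evalF _ := (himp : evalF _ → evalF _) hA
          rcases ih1 (fm_push.2 ⟨h1, hB⟩) with hd | ⟨Y, hY, _⟩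
          · exact Or.inl (ex_addl hd)
          · exact absurd hY (by simp)
      · exact Or.inr hx
  | @imp1R Γ' Δ' A B _ _ ih =>
      by_cases hA : evalF A
      · rcases ih (fm_push.2 ⟨hΓ, hA⟩) with hd | ⟨X, hX, hvX⟩
        · exact Or.inl hd
        · injection hX with eX; subst eX
          exact Or.inr ⟨_, rfl, fun _ => hvX⟩
      · exact Or.inr ⟨_, rfl, fun h => absurd h hA⟩
  | @imp2R Γ' Δ' A B _ _ ih =>
      by_cases hA : evalF A
      · rcases ih (fm_push.2 ⟨hΓ, hA⟩) with hd | ⟨X, hX, _⟩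
        · rcases ex_pop hd with hd' | hB
          · exact Or.inl hd'
          · exact Or.inr ⟨_, rfl, fun _ => hB⟩
        · exact absurd hX (by simp)
      · exact Or.inr ⟨_, rfl, fun h => absurd h hA⟩

/-- the empty sequent is not derivable -/
lemma no_empty : ¬ MLPDer P 0 0 none := by
  intro h
  rcases snd h (by simp) with ⟨D, hD, _⟩ | ⟨X, hX, _⟩
  · simp at hD
  · simp at hX

end Snd
section Slash
variable {V : Type}

/-- the "slash" content of a formula relative to a body multiset -/
def CC (P : Set (Fml V)) : Fml V → Multiset (Fml V) → Prop
  | .zero, _ => False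
  | .bot, _ => False
  | .var _, _ => True
  | .and A B, Θ =>
      ((CC P A Θ ∧ MLPDer P 0 Θ (some A)) ∨ MLPDer P 0 (Θ + {A}) none) ∧
      ((CC P B Θ ∧ MLPDer P 0 Θ (some B)) ∨ MLPDer P 0 (Θ + {B}) none)
  | .or A B, Θ =>
      ((CC P A Θ ∧ MLPDer P 0 Θ (some A)) ∨ MLPDer P 0 (Θ + {A}) none) ∨
      ((CC P B Θ ∧ MLPDer P 0 Θ (some B)) ∨ MLPDer P 0 (Θ + {B}) none)
  | .imp A B, Θ => ∀ W : Multiset (Fml V), (∀ x ∈ W, x ∈ P) →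
      (CC P A W ∧ MLPDer P 0 W (some A)) →
      (((CC P B (Θ + W) ∧ MLPDer P 0 (Θ + W) (some B)) ∨ MLPDer P 0 ((Θ + W) + {B}) none) ∨
        MLPDer P 0 (Θ + W) none)

variable {P : Set (Fml V)}

/-- contentful stoup-goodness -/
def HG (P : Set (Fml V)) (A : Fml V) (Θ : Multiset (Fml V)) : Prop :=
  CC P A Θ ∧ MLPDer P 0 Θ (some A)

/-- goodness: contentful stoup-goodness or body-derivability -/
def GN (P : Set (Fml V)) (A : Fml V) (Θ : Multiset (Fml V)) : Prop :=
  HG P A Θ ∨ MLPDer P 0 (Θ + {A}) none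

lemma cc_and {A B : Fml V} {Θ} : CC P (.and A B) Θ ↔ GN P A Θ ∧ GN P B Θ := Iff.rfl
lemma cc_or {A B : Fml V} {Θ} : CC P (.or A B) Θ ↔ GN P A Θ ∨ GN P B Θ := Iff.rfl
lemma cc_imp {A B : Fml V} {Θ} : CC P (.imp A B) Θ ↔
    ∀ W, (∀ x ∈ W, x ∈ P) → HG P A W → (GN P B (Θ + W) ∨ MLPDer P 0 (Θ + W) none) := Iff.rfl

lemma cc_cast {X : Fml V} {Θ Θ'} (h : CC P X Θ) (e : Θ = Θ') : CC P X Θ' := e ▸ h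
lemma hg_cast {X : Fml V} {Θ Θ'} (h : HG P X Θ) (e : Θ = Θ') : HG P X Θ' := e ▸ h
lemma gn_cast {X : Fml V} {Θ Θ'} (h : GN P X Θ) (e : Θ = Θ') : GN P X Θ' := e ▸ h

/-- monotonicity of the slash in the body -/
lemma mono_cc {W : Multiset (Fml V)} (hW : ∀ x ∈ W, x ∈ P) :
    ∀ (X : Fml V) (Θ : Multiset (Fml V)), CC P X Θ → CC P X (Θ + W) := by
  intro X
  induction X with
  | zero => intro Θ h; exact h.elim
  | bot => intro Θ h; exact h.elim
  | var v => intro Θ h; trivial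
  | and A B ihA ihB =>
      intro Θ h
      obtain ⟨ha, hb⟩ := cc_and.1 h
      refine cc_and.2 ⟨?_, ?_⟩
      · rcases ha with ⟨hc, hd⟩ | hd
        · exact Or.inl ⟨ihA Θ hc, wb hd W hW⟩
        · exact Or.inr (dcast (wb hd W hW) rfl (by abel))
      · rcases hb with ⟨hc, hd⟩ | hd
        · exact Or.inl ⟨ihB Θ hc, wb hd W hW⟩
        · exact Or.inr (dcast (wb hd W hW) rfl (by abel))
  | or A B ihA ihB =>
      intro Θ h
      rcases cc_or.1 h with ha | hb
      · refine cc_or.2 (Or.inl ?_)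
        rcases ha with ⟨hc, hd⟩ | hd
        · exact Or.inl ⟨ihA Θ hc, wb hd W hW⟩
        · exact Or.inr (dcast (wb hd W hW) rfl (by abel))
      · refine cc_or.2 (Or.inr ?_)
        rcases hb with ⟨hc, hd⟩ | hd
        · exact Or.inl ⟨ihB Θ hc, wb hd W hW⟩
        · exact Or.inr (dcast (wb hd W hW) rfl (by abel))
  | imp A B ihA ihB =>
      intro Θ h
      refine cc_imp.2 ?_
      intro W' hW' hA
      rcases cc_imp.1 h W' hW' hA with hg | hn
      · refine Or.inl ?_
        rcases hg with ⟨hc, hd⟩ | hd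
        · exact Or.inl ⟨cc_cast (ihB (Θ + W') hc) (by abel), dcast (wb hd W hW) rfl (by abel)⟩
        · exact Or.inr (dcast (wb hd W hW) rfl (by abel))
      · exact Or.inr (dcast (wb hn W hW) rfl (by abel))

lemma mono_hg {W : Multiset (Fml V)} (hW : ∀ x ∈ W, x ∈ P) {X : Fml V} {Θ}
    (h : HG P X Θ) : HG P X (Θ + W) := ⟨mono_cc hW X Θ h.1, wb h.2 W hW⟩

lemma mono_gn {W : Multiset (Fml V)} (hW : ∀ x ∈ W, x ∈ P) {X : Fml V} {Θ}
    (h : GN P X Θ) : GN P X (Θ + W) := by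
  rcases h with h | h
  · exact Or.inl (mono_hg hW h)
  · exact Or.inr (dcast (wb h W hW) rfl (by abel))


lemma cb_mid {Θ W R : Multiset (Fml V)} {Ξ : Option (Fml V)}
    (h : MLPDer P 0 (Θ + W + W + R) Ξ) : MLPDer P 0 ((Θ + W) + R) Ξ := by
  have h1 : MLPDer P 0 ((Θ + R) + W + W) Ξ := dcast h rfl (by abel)
  have h2 := cb (Γ := (0:Multiset (Fml V))) W h1
  exact dcast h2 rfl (by abel)

lemma eb_mid {Θ R Λ : Multiset (Fml V)} {A : Fml V} {Ξ : Option (Fml V)}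
    (h : MLPDer P 0 (Θ + {A} + R) Ξ) (hA : MLPDer P {A} Λ none) :
    MLPDer P 0 ((Θ + Λ) + R) Ξ := by
  have h1 : MLPDer P 0 ((Θ + R) + {A}) Ξ := dcast h rfl (by abel)
  have h2 := elim_body h1 hA
  exact dcast h2 rfl (by abel)

/-- contraction for the slash -/
lemma contr_cc {W : Multiset (Fml V)} :
    ∀ (X : Fml V) (Θ : Multiset (Fml V)), CC P X (Θ + W + W) → CC P X (Θ + W) := by
  intro X
  induction X with
  | zero => intro Θ h; exact h.elim
  | bot => intro Θ h; exact h.elim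
  | var v => intro Θ h; trivial
  | and A B ihA ihB =>
      intro Θ h
      obtain ⟨ha, hb⟩ := cc_and.1 h
      refine cc_and.2 ⟨?_, ?_⟩
      · rcases ha with ⟨hc, hd⟩ | hd
        · exact Or.inl ⟨ihA Θ hc, cb W hd⟩
        · exact Or.inr (cb_mid hd)
      · rcases hb with ⟨hc, hd⟩ | hd
        · exact Or.inl ⟨ihB Θ hc, cb W hd⟩
        · exact Or.inr (cb_mid hd)
  | or A B ihA ihB =>
      intro Θ h
      rcases cc_or.1 h with ha | hb
      · refine cc_or.2 (Or.inl ?_)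
        rcases ha with ⟨hc, hd⟩ | hd
        · exact Or.inl ⟨ihA Θ hc, cb W hd⟩
        · exact Or.inr (cb_mid hd)
      · refine cc_or.2 (Or.inr ?_)
        rcases hb with ⟨hc, hd⟩ | hd
        · exact Or.inl ⟨ihB Θ hc, cb W hd⟩
        · exact Or.inr (cb_mid hd)
  | imp A B ihA ihB =>
      intro Θ h
      refine cc_imp.2 ?_
      intro W' hW' hA
      rcases cc_imp.1 h W' hW' hA with hg | hn
      · refine Or.inl ?_
        rcases hg with ⟨hc, hd⟩ | hd
        · refine Or.inl ⟨?_, ?_⟩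
          · have := ihB (Θ + W') (cc_cast hc (by abel))
            exact cc_cast this (by abel)
          · exact cb_mid hd
        · refine Or.inr ?_
          have hd' : MLPDer P 0 (Θ + W + W + (W' + {B})) none := dcast hd rfl (by abel)
          exact dcast (cb_mid hd') rfl (by abel)
      · exact Or.inr (cb_mid hn)

lemma contr_hg {W : Multiset (Fml V)} {X : Fml V} {Θ}
    (h : HG P X (Θ + W + W)) : HG P X (Θ + W) := ⟨contr_cc X Θ h.1, cb W h.2⟩

lemma contr_gn {W : Multiset (Fml V)} {X : Fml V} {Θ}
    (h : GN P X (Θ + W + W)) : GN P X (Θ + W) := by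
  rcases h with h | h
  · exact Or.inl (contr_hg h)
  · exact Or.inr (cb_mid h)

/-- duplicate-Θ contraction in the common shape -/
lemma contr_hg' {Θ a b : Multiset (Fml V)} {X : Fml V}
    (h : HG P X ((Θ + a) + (Θ + b))) : HG P X (Θ + (a + b)) := by
  have := contr_hg (W := Θ) (Θ := a + b) (hg_cast h (by abel))
  exact hg_cast this (by abel)

lemma contr_gn' {Θ a b : Multiset (Fml V)} {X : Fml V}
    (h : GN P X ((Θ + a) + (Θ + b))) : GN P X (Θ + (a + b)) := by
  have := contr_gn (W := Θ) (Θ := a + b) (gn_cast h (by abel))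
  exact gn_cast this (by abel)

lemma nr_dup {Θ a b : Multiset (Fml V)} {Ξ : Option (Fml V)}
    (h : MLPDer P 0 ((Θ + a) + (Θ + b)) Ξ) : MLPDer P 0 (Θ + (a + b)) Ξ := by
  have h1 : MLPDer P 0 ((a + b) + Θ + Θ) Ξ := dcast h rfl (by abel)
  have h2 := cb (Γ := (0:Multiset (Fml V))) Θ h1
  exact dcast h2 rfl (by abel)

/-- transport of the slash along elimination of a body formula -/
lemma tr_cc {A : Fml V} {Λ : Multiset (Fml V)} (hA : MLPDer P {A} Λ none) :
    ∀ (X : Fml V) (Θ : Multiset (Fml V)), CC P X (Θ + {A}) → CC P X (Θ + Λ) := by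
  intro X
  induction X with
  | zero => intro Θ h; exact h.elim
  | bot => intro Θ h; exact h.elim
  | var v => intro Θ h; trivial
  | and A' B' ihA ihB =>
      intro Θ h
      obtain ⟨ha, hb⟩ := cc_and.1 h
      refine cc_and.2 ⟨?_, ?_⟩
      · rcases ha with ⟨hc, hd⟩ | hd
        · exact Or.inl ⟨ihA Θ hc, elim_body hd hA⟩
        · exact Or.inr (eb_mid hd hA)
      · rcases hb with ⟨hc, hd⟩ | hd
        · exact Or.inl ⟨ihB Θ hc, elim_body hd hA⟩
        · exact Or.inr (eb_mid hd hA)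
  | or A' B' ihA ihB =>
      intro Θ h
      rcases cc_or.1 h with ha | hb
      · refine cc_or.2 (Or.inl ?_)
        rcases ha with ⟨hc, hd⟩ | hd
        · exact Or.inl ⟨ihA Θ hc, elim_body hd hA⟩
        · exact Or.inr (eb_mid hd hA)
      · refine cc_or.2 (Or.inr ?_)
        rcases hb with ⟨hc, hd⟩ | hd
        · exact Or.inl ⟨ihB Θ hc, elim_body hd hA⟩
        · exact Or.inr (eb_mid hd hA)
  | imp A' B' ihA ihB =>
      intro Θ h
      refine cc_imp.2 ?_
      intro W' hW' hA'
      rcases cc_imp.1 h W' hW' hA' with hg | hn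
      · refine Or.inl ?_
        rcases hg with ⟨hc, hd⟩ | hd
        · refine Or.inl ⟨?_, ?_⟩
          · have := ihB (Θ + W') (cc_cast hc (by abel))
            exact cc_cast this (by abel)
          · exact eb_mid hd hA
        · refine Or.inr ?_
          have hd' : MLPDer P 0 (Θ + {A} + (W' + {B'})) none := dcast hd rfl (by abel)
          exact dcast (eb_mid hd' hA) rfl (by abel)
      · exact Or.inr (eb_mid hn hA)

lemma tr_hg {A : Fml V} {Λ : Multiset (Fml V)} (hA : MLPDer P {A} Λ none)
    {X : Fml V} {Θ} (h : HG P X (Θ + {A})) : HG P X (Θ + Λ) :=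
  ⟨tr_cc hA X Θ h.1, elim_body h.2 hA⟩

end Slash
section MainAux
variable {V : Type} {P : Set (Fml V)}

lemma pair_eq {A : Fml V} : ({A, A} : Multiset (Fml V)) = {A} + {A} := rfl

lemma pair_eq2 {A B : Fml V} : ({A, B} : Multiset (Fml V)) = {B} + {A} := by
  rw [Multiset.singleton_add, Multiset.insert_eq_cons]
  exact Multiset.cons_swap A B 0

lemma cc_zero {Θ : Multiset (Fml V)} : CC P .zero Θ ↔ False := Iff.rfl
lemma cc_bot {Θ : Multiset (Fml V)} : CC P .bot Θ ↔ False := Iff.rfl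

lemma dup_body {Γ Θ Δ : Multiset (Fml V)} {Ξ : Option (Fml V)}
    (h : MLPDer P Γ (Θ + (Θ + Δ)) Ξ) : MLPDer P Γ (Θ + Δ) Ξ := by
  have h1 : MLPDer P Γ (Δ + Θ + Θ) Ξ := dcast h rfl (by abel)
  exact dcast (cb Θ h1) rfl (by abel)

lemma hg_dup {Θ Δ : Multiset (Fml V)} {X : Fml V}
    (h : HG P X (Θ + (Θ + Δ))) : HG P X (Θ + Δ) := by
  have h1 : HG P X ((Θ + 0) + (Θ + Δ)) := hg_cast h (by abel)
  exact hg_cast (contr_hg' h1) (by abel)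

lemma gn_dup {Θ Δ : Multiset (Fml V)} {X : Fml V}
    (h : GN P X (Θ + (Θ + Δ))) : GN P X (Θ + Δ) := by
  have h1 : GN P X ((Θ + 0) + (Θ + Δ)) := gn_cast h (by abel)
  exact gn_cast (contr_gn' h1) (by abel)

lemma hyps_mono {Γ Θ W : Multiset (Fml V)} (hyp : ∀ G ∈ Γ, HG P G Θ)
    (hW : ∀ x ∈ W, x ∈ P) : ∀ G ∈ Γ, HG P G (Θ + W) :=
  fun G hG => mono_hg hW (hyp G hG)

end MainAux

section Main
variable {V : Type} {P : Set (Fml V)}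

theorem main {Γ Δ : Multiset (Fml V)} {Ξ : Option (Fml V)}
    (h : MLPG P Set.univ true Γ Δ Ξ) :
    ∀ Θ : Multiset (Fml V), (∀ x ∈ Θ, x ∈ P) → (∀ G ∈ Γ, HG P G Θ) →
      (∃ X, Ξ = some X ∧ HG P X (Θ + Δ)) ∨ MLPDer P 0 (Θ + Δ) none := by
  induction h with
  | ax A _ =>
      intro Θ hΘ hyp
      exact Or.inl ⟨A, rfl, hg_cast (hyp A (by simp)) (by simp)⟩
  | @cut1 Γ Γ' Δ Δ' A Ξ _ _ d1 d2 ih1 ih2 =>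
      intro Θ hΘ hyp
      obtain ⟨hy1, hy2⟩ := fm_add.1 hyp
      rcases ih1 Θ hΘ hy1 with ⟨X, hX, hgA⟩ | hdef
      · injection hX with e; subst e
        have hΘΔ : ∀ x ∈ Θ + Δ, x ∈ P := memP_add hΘ (inv d1)
        have hy2' : ∀ G ∈ Γ' + {A}, HG P G (Θ + Δ) :=
          fm_push.2 ⟨hyps_mono hy2 (inv d1), hgA⟩
        rcases ih2 (Θ + Δ) hΘΔ hy2' with ⟨X, hX, hgX⟩ | hdef2
        · exact Or.inl ⟨X, hX, hg_cast hgX (by abel)⟩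
        · exact Or.inr (dcast hdef2 rfl (by abel))
      · exact Or.inr (dcast (wb hdef Δ' (inv d2)) rfl (by abel))
  | @cut2 Γ Γ' Δ Δ' A Ξ _ _ d1 d2 ih1 ih2 =>
      intro Θ hΘ hyp
      obtain ⟨hy1, hy2⟩ := fm_add.1 hyp
      have d2' : MLPDer P ({A} + Γ') Δ' none := dcast d2 (by abel) rfl
      have eA : MLPDer P {A} (Θ + Δ') none :=
        cutaway hΘ Γ' d2' (fun G hG => (hy2 G hG).2)
      rcases ih1 Θ hΘ hy1 with ⟨X, hX, hg⟩ | hdef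
      · refine Or.inl ⟨X, hX, ?_⟩
        have hg1 : HG P X ((Θ + Δ) + {A}) := hg_cast hg (by abel)
        have hg2 : HG P X ((Θ + Δ) + (Θ + Δ')) := tr_hg eA hg1
        exact hg_cast (contr_hg' hg2) (by abel)
      · have h1 : MLPDer P 0 ((Θ + Δ) + {A}) none := dcast hdef rfl (by abel)
        have h2 := elim_body h1 eA
        exact Or.inr (nr_dup h2)
  | @der Γ Δ A hA _ d ih =>
      intro Θ hΘ hyp
      rcases ih Θ hΘ hyp with ⟨X, hX, hg⟩ | hdef
      · injection hX with e; subst e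
        have := MLPG.der hA seqin_univ hg.2
        exact Or.inr (dcast this rfl (by abel))
      · exact Or.inr (dcast (wb hdef {A} (memP_sing hA)) rfl (by abel))
  | @cl Γ Δ A Ξ _ d ih =>
      intro Θ hΘ hyp
      obtain ⟨h1, hA⟩ := fm_push.1 hyp
      exact ih Θ hΘ (fm_pair.2 ⟨h1, hA, hA⟩)
  | @cr Γ Δ A Ξ _ d ih =>
      intro Θ hΘ hyp
      rcases ih Θ hΘ hyp with ⟨X, hX, hg⟩ | hdef
      · refine Or.inl ⟨X, hX, ?_⟩
        have hg1 : HG P X ((Θ + Δ) + {A} + {A}) :=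
          hg_cast hg (by rw [pair_eq]; abel)
        exact hg_cast (contr_hg hg1) (by abel)
      · have h1 : MLPDer P 0 ((Θ + Δ) + {A} + {A}) none :=
          dcast hdef rfl (by rw [pair_eq]; abel)
        exact Or.inr (dcast (cb {A} h1) rfl (by abel))
  | @wl Γ Δ A Ξ _ d ih =>
      intro Θ hΘ hyp
      exact ih Θ hΘ (fm_push.1 hyp).1
  | @wr Γ Δ A Ξ hA _ d ih =>
      intro Θ hΘ hyp
      rcases ih Θ hΘ hyp with ⟨X, hX, hg⟩ | hdef
      · exact Or.inl ⟨X, hX, hg_cast (mono_hg (memP_sing hA) hg) (by abel)⟩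
      · exact Or.inr (dcast (wb hdef {A} (memP_sing hA)) rfl (by abel))
  | @zeroL Γ Δ Ξ hΔ _ =>
      intro Θ hΘ hyp
      exact (cc_zero.1 ((fm_push.1 hyp).2.1)).elim
  | botL _ =>
      intro Θ hΘ hyp
      exact (cc_bot.1 ((fm_sing.1 hyp).1)).elim
  | @and1L Γ Δ A B C hA hB _ d ih =>
      intro Θ hΘ hyp
      obtain ⟨h1, hand⟩ := fm_push.1 hyp
      obtain ⟨ga, gb⟩ := cc_and.1 hand.1
      rcases ga with hga | fa
      · rcases gb with hgb | fb
        · exact ih Θ hΘ (fm_pair.2 ⟨h1, hga, hgb⟩)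
        · exact absurd (memP_pop' (inv fb)) hB
      · exact absurd (memP_pop' (inv fa)) hA
  | @and2L Γ Δ A B _ d ih =>
      intro Θ hΘ hyp
      obtain ⟨h1, hand⟩ := fm_push.1 hyp
      obtain ⟨ga, gb⟩ := cc_and.1 hand.1
      have d' : MLPDer P ({A, B} + Γ) Δ none := by
        refine dcast d ?_ rfl
        show Γ + {A, B} = {A, B} + Γ
        abel
      have c : MLPDer P {A, B} (Θ + Δ) none :=
        cutaway hΘ Γ d' (fun G hG => (h1 G hG).2)
      have c' : MLPDer P ({B} + {A}) (Θ + Δ) none := by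
        refine dcast c ?_ rfl
        exact pair_eq2
      have cB : MLPDer P {B} (Θ + Δ) none := by
        rcases ga with hga | fa
        · have := cut1' hga.2 c'
          exact dup_body (dcast this (by simp) rfl)
        · have := cut2' (Γ := (0:Multiset (Fml V))) (Δ := Θ) fa c'
          exact dup_body (dcast this (by simp) rfl)
      have cB' : MLPDer P ((0:Multiset (Fml V)) + {B}) (Θ + Δ) none := by
        exact dcast cB (by simp) rfl
      rcases gb with hgb | fb
      · have := cut1' hgb.2 cB'
        exact Or.inr (dup_body (dcast this (by simp) rfl))
      · have := cut2' (Γ := (0:Multiset (Fml V))) (Δ := Θ) fb cB'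
        exact Or.inr (dup_body (dcast this (by simp) rfl))
  | @and1R Γ Γ' Δ Δ' A B _ d1 d2 ih1 ih2 =>
      intro Θ hΘ hyp
      obtain ⟨hy1, hy2⟩ := fm_add.1 hyp
      rcases ih1 Θ hΘ hy1 with ⟨X, hX, hgA⟩ | hdef
      · injection hX with e; subst e
        rcases ih2 Θ hΘ hy2 with ⟨Y, hY, hgB⟩ | hdef2
        · injection hY with e2; subst e2
          refine Or.inl ⟨_, rfl, ?_, ?_⟩
          · refine cc_and.2 ⟨Or.inl (hg_cast (mono_hg (inv d2) hgA) (by abel)),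
              Or.inl (hg_cast (mono_hg (inv d1) hgB) (by abel))⟩
          · have := MLPG.and1R seqin_univ hgA.2 hgB.2
            have h1 : MLPDer P 0 ((Θ + Δ) + (Θ + Δ')) (some (Fml.and A B)) :=
              dcast this (by simp) rfl
            exact nr_dup h1
        · exact Or.inr (dcast (wb hdef2 Δ (inv d1)) rfl (by abel))
      · exact Or.inr (dcast (wb hdef Δ' (inv d2)) rfl (by abel))
  | @and2R Γ Γ' Δ Δ' A B _ d1 d2 ih1 ih2 =>
      intro Θ hΘ hyp
      obtain ⟨hy1, hy2⟩ := fm_add.1 hyp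
      have f1 : MLPDer P 0 ((Θ + Δ) + {A}) none :=
        dcast ((ih1 Θ hΘ hy1).resolve_left (by rintro ⟨X, hX, -⟩; simp at hX)) rfl (by abel)
      have f2 : MLPDer P 0 ((Θ + Δ') + {B}) none :=
        dcast ((ih2 Θ hΘ hy2).resolve_left (by rintro ⟨X, hX, -⟩; simp at hX)) rfl (by abel)
      refine Or.inl ⟨_, rfl, ?_, ?_⟩
      · refine cc_and.2 ⟨Or.inr ?_, Or.inr ?_⟩
        · exact dcast (wb f1 Δ' (memP_pop (inv d2))) rfl (by abel)
        · exact dcast (wb f2 Δ (memP_pop (inv d1))) rfl (by abel)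
      · have := MLPG.and2R seqin_univ f1 f2
        have h1 : MLPDer P 0 ((Θ + Δ) + (Θ + Δ')) (some (Fml.and A B)) :=
          dcast this (by simp) rfl
        exact nr_dup h1
  | @and3R Γ Γ' Δ Δ' A B _ d1 d2 ih1 ih2 =>
      intro Θ hΘ hyp
      obtain ⟨hy1, hy2⟩ := fm_add.1 hyp
      have f2 : MLPDer P 0 ((Θ + Δ') + {B}) none :=
        dcast ((ih2 Θ hΘ hy2).resolve_left (by rintro ⟨X, hX, -⟩; simp at hX)) rfl (by abel)
      rcases ih1 Θ hΘ hy1 with ⟨X, hX, hgA⟩ | hdef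
      · injection hX with e; subst e
        refine Or.inl ⟨_, rfl, ?_, ?_⟩
        · refine cc_and.2 ⟨Or.inl (hg_cast (mono_hg (memP_pop (inv d2)) hgA) (by abel)),
            Or.inr (dcast (wb f2 Δ (inv d1)) rfl (by abel))⟩
        · have := MLPG.and3R seqin_univ hgA.2 f2
          have h1 : MLPDer P 0 ((Θ + Δ) + (Θ + Δ')) (some (Fml.and A B)) :=
            dcast this (by simp) rfl
          exact nr_dup h1
      · exact Or.inr (dcast (wb hdef Δ' (memP_pop (inv d2))) rfl (by abel))
  | @and4R Γ Γ' Δ Δ' A B _ d1 d2 ih1 ih2 =>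
      intro Θ hΘ hyp
      obtain ⟨hy1, hy2⟩ := fm_add.1 hyp
      have f1 : MLPDer P 0 ((Θ + Δ) + {A}) none :=
        dcast ((ih1 Θ hΘ hy1).resolve_left (by rintro ⟨X, hX, -⟩; simp at hX)) rfl (by abel)
      rcases ih2 Θ hΘ hy2 with ⟨Y, hY, hgB⟩ | hdef
      · injection hY with e; subst e
        refine Or.inl ⟨_, rfl, ?_, ?_⟩
        · refine cc_and.2 ⟨Or.inr (dcast (wb f1 Δ' (inv d2)) rfl (by abel)),
            Or.inl (hg_cast (mono_hg (memP_pop (inv d1)) hgB) (by abel))⟩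
        · have := MLPG.and4R seqin_univ f1 hgB.2
          have h1 : MLPDer P 0 ((Θ + Δ) + (Θ + Δ')) (some (Fml.and A B)) :=
            dcast this (by simp) rfl
          exact nr_dup h1
      · exact Or.inr (dcast (wb hdef Δ (memP_pop (inv d1))) rfl (by abel))
  | @or1L Γ Δ A B C hA hB _ d1 d2 ih1 ih2 =>
      intro Θ hΘ hyp
      obtain ⟨h1, hor⟩ := fm_push.1 hyp
      rcases cc_or.1 hor.1 with ga | gb
      · rcases ga with hga | fa
        · exact ih1 Θ hΘ (fm_push.2 ⟨h1, hga⟩)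
        · exact absurd (memP_pop' (inv fa)) hA
      · rcases gb with hgb | fb
        · exact ih2 Θ hΘ (fm_push.2 ⟨h1, hgb⟩)
        · exact absurd (memP_pop' (inv fb)) hB
  | @or2L Γ Δ A B _ d1 d2 ih1 ih2 =>
      intro Θ hΘ hyp
      obtain ⟨h1, hor⟩ := fm_push.1 hyp
      rcases cc_or.1 hor.1 with ga | gb
      · rcases ga with hga | fa
        · exact ih1 Θ hΘ (fm_push.2 ⟨h1, hga⟩)
        · have d' : MLPDer P ({A} + Γ) Δ none := dcast d1 (by abel) rfl
          have c : MLPDer P ((0:Multiset (Fml V)) + {A}) (Θ + Δ) none :=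
            dcast (cutaway hΘ Γ d' (fun G hG => (h1 G hG).2)) (by simp) rfl
          have := cut2' (Γ := (0:Multiset (Fml V))) (Δ := Θ) fa c
          exact Or.inr (dup_body (dcast this (by simp) rfl))
      · rcases gb with hgb | fb
        · exact ih2 Θ hΘ (fm_push.2 ⟨h1, hgb⟩)
        · have d' : MLPDer P ({B} + Γ) Δ none := dcast d2 (by abel) rfl
          have c : MLPDer P ((0:Multiset (Fml V)) + {B}) (Θ + Δ) none :=
            dcast (cutaway hΘ Γ d' (fun G hG => (h1 G hG).2)) (by simp) rfl
          have := cut2' (Γ := (0:Multiset (Fml V))) (Δ := Θ) fb c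
          exact Or.inr (dup_body (dcast this (by simp) rfl))
  | @or1R Γ Δ A B _ d ih =>
      intro Θ hΘ hyp
      rcases ih Θ hΘ hyp with ⟨X, hX, hgA⟩ | hdef
      · injection hX with e; subst e
        exact Or.inl ⟨_, rfl, cc_or.2 (Or.inl (Or.inl hgA)), MLPG.or1R seqin_univ hgA.2⟩
      · exact Or.inr hdef
  | @or2R Γ Δ A B _ d ih =>
      intro Θ hΘ hyp
      rcases ih Θ hΘ hyp with ⟨X, hX, hgB⟩ | hdef
      · injection hX with e; subst e
        exact Or.inl ⟨_, rfl, cc_or.2 (Or.inr (Or.inl hgB)), MLPG.or2R seqin_univ hgB.2⟩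
      · exact Or.inr hdef
  | @or3R Γ Δ A B _ d ih =>
      intro Θ hΘ hyp
      have f : MLPDer P 0 ((Θ + Δ) + {A}) none :=
        dcast ((ih Θ hΘ hyp).resolve_left (by rintro ⟨X, hX, -⟩; simp at hX)) rfl (by abel)
      exact Or.inl ⟨_, rfl, cc_or.2 (Or.inl (Or.inr f)), MLPG.or3R seqin_univ f⟩
  | @or4R Γ Δ A B _ d ih =>
      intro Θ hΘ hyp
      have f : MLPDer P 0 ((Θ + Δ) + {B}) none :=
        dcast ((ih Θ hΘ hyp).resolve_left (by rintro ⟨X, hX, -⟩; simp at hX)) rfl (by abel)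
      exact Or.inl ⟨_, rfl, cc_or.2 (Or.inr (Or.inr f)), MLPG.or4R seqin_univ f⟩
  | @imp1L Γ Γ' Δ Δ' A B C hB _ d1 d2 ih1 ih2 =>
      intro Θ hΘ hyp
      obtain ⟨h12, himp⟩ := fm_push.1 hyp
      obtain ⟨h1, h2⟩ := fm_add.1 h12
      rcases ih2 Θ hΘ h2 with ⟨X, hX, hgA⟩ | hdef
      · injection hX with e; subst e
        have hW : ∀ x ∈ Θ + Δ', x ∈ P := memP_add hΘ (inv d2)
        rcases cc_imp.1 himp.1 (Θ + Δ') hW hgA with hgn | hn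
        · rcases gn_dup hgn with hgB | fB
          · rcases ih1 (Θ + Δ') hW (fm_push.2 ⟨hyps_mono h1 (inv d2), hgB⟩) with
              ⟨X, hX, hg⟩ | hdef2
            · exact Or.inl ⟨X, hX, hg_cast hg (by abel)⟩
            · exact Or.inr (dcast hdef2 rfl (by abel))
          · exact absurd (memP_pop' (inv fB)) hB
        · exact Or.inr (dcast (wb (dup_body hn) Δ (inv d1)) rfl (by abel))
      · exact Or.inr (dcast (wb hdef Δ (inv d1)) rfl (by abel))
  | @imp2L Γ Γ' Δ Δ' A B _ d1 d2 ih1 ih2 =>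
      intro Θ hΘ hyp
      obtain ⟨h12, himp⟩ := fm_push.1 hyp
      obtain ⟨h1, h2⟩ := fm_add.1 h12
      rcases ih2 Θ hΘ h2 with ⟨X, hX, hgA⟩ | hdef
      · injection hX with e; subst e
        have hW : ∀ x ∈ Θ + Δ', x ∈ P := memP_add hΘ (inv d2)
        rcases cc_imp.1 himp.1 (Θ + Δ') hW hgA with hgn | hn
        · rcases gn_dup hgn with hgB | fB
          · have := ih1 (Θ + Δ') hW (fm_push.2 ⟨hyps_mono h1 (inv d2), hgB⟩)
            have hr := this.resolve_left (by rintro ⟨X, hX, -⟩; simp at hX)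
            exact Or.inr (dcast hr rfl (by abel))
          · have d' : MLPDer P ({B} + Γ) Δ none := dcast d1 (by abel) rfl
            have c : MLPDer P ((0:Multiset (Fml V)) + {B}) (Θ + Δ) none :=
              dcast (cutaway hΘ Γ d' (fun G hG => (h1 G hG).2)) (by simp) rfl
            have := cut2' (Γ := (0:Multiset (Fml V))) (Δ := Θ + Δ') fB c
            have h3 : MLPDer P 0 ((Θ + Δ') + (Θ + Δ)) none := dcast this (by simp) rfl
            exact Or.inr (dcast (nr_dup h3) rfl (by abel))
        · exact Or.inr (dcast (wb (dup_body hn) Δ (inv d1)) rfl (by abel))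
      · exact Or.inr (dcast (wb hdef Δ (inv d1)) rfl (by abel))
  | @imp3L Γ Γ' Δ Δ' A B Ξ _ d1 d2 ih1 ih2 =>
      intro Θ hΘ hyp
      obtain ⟨h12, himp⟩ := fm_push.1 hyp
      obtain ⟨h1, h2⟩ := fm_add.1 h12
      have d1' : MLPDer P ({B} + Γ) Δ none := dcast d1 (by abel) rfl
      have c1 : MLPDer P ((0:Multiset (Fml V)) + {B}) (Θ + Δ) none :=
        dcast (cutaway hΘ Γ d1' (fun G hG => (h1 G hG).2)) (by simp) rfl
      have i2l := MLPG.imp2L (P := P) (S := Set.univ) (cut := true) seqin_univ c1 (ax' A)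
      have i2l' : MLPDer P ({A} + {Fml.imp A B}) (Θ + Δ) none := dcast i2l (by simp) (by simp)
      have eA0 := cut1' himp.2 i2l'
      have eA : MLPDer P {A} (Θ + Δ) none := by
        have h3 : MLPDer P {A} (Θ + (Θ + Δ)) none := dcast eA0 (by simp) rfl
        exact dup_body h3
      rcases ih2 Θ hΘ h2 with ⟨X, hX, hg⟩ | hdef
      · refine Or.inl ⟨X, hX, ?_⟩
        have hg1 : HG P X ((Θ + Δ') + {A}) := hg_cast hg (by abel)
        have hg2 : HG P X ((Θ + Δ') + (Θ + Δ)) := tr_hg eA hg1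
        exact hg_cast (contr_hg' hg2) (by abel)
      · have h3 : MLPDer P 0 ((Θ + Δ') + {A}) none := dcast hdef rfl (by abel)
        have h4 := elim_body h3 eA
        exact Or.inr (dcast (nr_dup h4) rfl (by abel))
  | @imp1R Γ Δ A B _ d ih =>
      intro Θ hΘ hyp
      have dd := MLPG.imp1R (P := P) (S := Set.univ) (cut := true) seqin_univ d
      have dd' : MLPDer P ((0:Multiset (Fml V)) + Γ) Δ (some (Fml.imp A B)) :=
        dcast dd (by simp) rfl
      have deriv : MLPDer P 0 (Θ + Δ) (some (Fml.imp A B)) :=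
        cutaway hΘ Γ dd' (fun G hG => (hyp G hG).2)
      refine Or.inl ⟨_, rfl, ?_, deriv⟩
      refine cc_imp.2 ?_
      intro W hW hA
      have hWP : ∀ x ∈ Θ + W, x ∈ P := memP_add hΘ hW
      have hyp' : ∀ G ∈ Γ + {A}, HG P G (Θ + W) :=
        fm_push.2 ⟨hyps_mono hyp hW, hg_cast (mono_hg hΘ hA) (by abel)⟩
      rcases ih (Θ + W) hWP hyp' with ⟨X, hX, hg⟩ | hdef
      · injection hX with e; subst e
        exact Or.inl (Or.inl (hg_cast hg (by abel)))
      · exact Or.inr (dcast hdef rfl (by abel))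
  | @imp2R Γ Δ A B _ d ih =>
      intro Θ hΘ hyp
      have dd := MLPG.imp2R (P := P) (S := Set.univ) (cut := true) seqin_univ d
      have dd' : MLPDer P ((0:Multiset (Fml V)) + Γ) Δ (some (Fml.imp A B)) :=
        dcast dd (by simp) rfl
      have deriv : MLPDer P 0 (Θ + Δ) (some (Fml.imp A B)) :=
        cutaway hΘ Γ dd' (fun G hG => (hyp G hG).2)
      refine Or.inl ⟨_, rfl, ?_, deriv⟩
      refine cc_imp.2 ?_
      intro W hW hA
      have hWP : ∀ x ∈ Θ + W, x ∈ P := memP_add hΘ hW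
      have hyp' : ∀ G ∈ Γ + {A}, HG P G (Θ + W) :=
        fm_push.2 ⟨hyps_mono hyp hW, hg_cast (mono_hg hΘ hA) (by abel)⟩
      have hr := (ih (Θ + W) hWP hyp').resolve_left (by rintro ⟨X, hX, -⟩; simp at hX)
      exact Or.inl (Or.inr (dcast hr rfl (by abel)))

end Main
/-- If `⊢_P ; A∨B`, then `⊢_P ;A` or `⊢_P A;` or `⊢_P ;B` or `⊢_P B;`. -/
theorem or_stoup_cases {V : Type} (P : Set (Fml V)) (A B : Fml V)
    (h : MLPDer P 0 0 (some (Fml.or A B))) :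
    MLPDer P 0 0 (some A) ∨ MLPDer P 0 {A} none ∨
      MLPDer P 0 0 (some B) ∨ MLPDer P 0 {B} none := by
  rcases main h 0 (by simp) (by simp) with ⟨X, hX, hg⟩ | hdef
  · injection hX with e; subst e
    rcases cc_or.1 hg.1 with ga | gb
    · rcases ga with hga | fa
      · exact Or.inl (dcast hga.2 rfl (by simp))
      · exact Or.inr (Or.inl (dcast fa rfl (by simp)))
    · rcases gb with hgb | fb
      · exact Or.inr (Or.inr (Or.inl (dcast hgb.2 rfl (by simp))))
      · exact Or.inr (Or.inr (Or.inr (dcast fb rfl (by simp))))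
  · exact absurd (dcast hdef rfl (by simp)) no_empty
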